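/- arXiv:1812.03528 — 2 statements merged into one kernel-verified Lean document; each statement's English description precedes it below -/
import Mathlib

section
/- For every ε > 0 and all x ∈ ℝ^m, one has ε⟨e,x⟩ ≤ Σᵢ ψ_ε′(xᵢ)·xᵢ. Consequently, for every x ∈ ℝ^m with ⟨e,x⟩ ≥ 0 and every u ∈ Δ, Σᵢ ψ_ε′(xᵢ)·(xᵢ − ⟨e,x⟩⁺uᵢ) ≥ 0. -/
open scoped BigOperators

/-- The piecewise function ψ. -/
noncomputable def psiFn (t : ℝ) : ℝ :=
  if t ≤ -1 then -(1/2)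
  else if t ≤ 0 then (t+1)^3 - (1/2)*(t+1)^4 - 1/2
  else t

/-- ψ_ε(t) := ψ(εt). -/
noncomputable def psiE (ε t : ℝ) : ℝ := psiFn (ε * t)

/-- Ψ(x) := Σᵢ ψ(xᵢ)/μᵢ. -/
noncomputable def bigPsi {m : ℕ} (μ : Fin m → ℝ) (x : Fin m → ℝ) : ℝ :=
  ∑ i, psiFn (x i) / μ i

/-- Ψ_ε(x) := Σᵢ ψ_ε(xᵢ)/μᵢ. -/
noncomputable def bigPsiE {m : ℕ} (μ : Fin m → ℝ) (ε : ℝ) (x : Fin m → ℝ) : ℝ :=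
  ∑ i, psiE ε (x i) / μ i

/-- The drift b(x,u) with bᵢ(x,u) = −ρμᵢ/m − μᵢ(xᵢ − ⟨e,x⟩⁺uᵢ) − γᵢ⟨e,x⟩⁺uᵢ. -/
noncomputable def drift {m : ℕ} (ρ : ℝ) (μ γ : Fin m → ℝ) (x u : Fin m → ℝ) :
    Fin m → ℝ :=
  fun i => -(ρ * μ i / m) - μ i * (x i - max (∑ j, x j) 0 * u i)
    - γ i * max (∑ j, x j) 0 * u i

/-- The extended generator L_u f(x) = Σᵢ λ̃ᵢ ∂²f/∂xᵢ²(x) + ⟨b(x,u), ∇f(x)⟩. -/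
noncomputable def genL {m : ℕ} (lam : Fin m → ℝ) (ρ : ℝ) (μ γ : Fin m → ℝ)
    (u : Fin m → ℝ) (f : (Fin m → ℝ) → ℝ) (x : Fin m → ℝ) : ℝ :=
  ∑ i, lam i * fderiv ℝ (fun y => fderiv ℝ f y (Pi.single i 1)) x (Pi.single i 1)
    + fderiv ℝ f x (drift ρ μ γ x u)

/-- ‖x‖₁ = Σᵢ|xᵢ|. -/
noncomputable def norm1 {m : ℕ} (x : Fin m → ℝ) : ℝ := ∑ i, |x i|

/-- ‖x⁻‖₁ = Σᵢ max(−xᵢ,0). -/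
noncomputable def norm1neg {m : ℕ} (x : Fin m → ℝ) : ℝ := ∑ i, max (-(x i)) 0

/-- The derivative of ψ. -/
noncomputable def psiDeriv (t : ℝ) : ℝ :=
  if t ≤ -1 then 0 else if t ≤ 0 then 3*(t+1)^2 - 2*(t+1)^3 else 1

lemma cubic_hasDerivAt (t : ℝ) :
    HasDerivAt (fun s : ℝ => (s+1)^3 - (1/2)*(s+1)^4 - 1/2)
      (3*(t+1)^2 - 2*(t+1)^3) t := by
  have h1 : HasDerivAt (fun s : ℝ => s + 1) 1 t := (hasDerivAt_id t).add_const 1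
  have h3 : HasDerivAt (fun s : ℝ => (s+1)^3) (3*(t+1)^2) t := by
    simpa using h1.fun_pow 3
  have h4 : HasDerivAt (fun s : ℝ => (s+1)^4) (4*(t+1)^3) t := by
    simpa using h1.fun_pow 4
  have := (h3.sub (h4.const_mul (1/2))).sub_const (1/2)
  exact this.congr_deriv (by ring)

lemma psiFn_of_le {s : ℝ} (h : s ≤ -1) : psiFn s = -(1/2) := by simp [psiFn, h]

lemma psiFn_of_mid {s : ℝ} (h1 : -1 ≤ s) (h2 : s ≤ 0) :
    psiFn s = (s+1)^3 - (1/2)*(s+1)^4 - 1/2 := by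
  rcases eq_or_lt_of_le h1 with h | h
  · rw [← h]; norm_num [psiFn]
  · simp [psiFn, not_le.mpr h, h2]

lemma psiFn_of_ge {s : ℝ} (h : 0 ≤ s) : psiFn s = s := by
  rcases eq_or_lt_of_le h with h | h
  · rw [← h]; norm_num [psiFn]
  · have h1 : ¬ s ≤ -1 := by linarith
    simp [psiFn, h1, not_le.mpr h]

lemma hasDerivAt_psiFn (t : ℝ) : HasDerivAt psiFn (psiDeriv t) t := by
  rcases lt_trichotomy t (-1) with h | h | h
  · have he : psiFn =ᶠ[nhds t] (fun _ => -(1/2 : ℝ)) := by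
      filter_upwards [Iio_mem_nhds h] with s hs
      exact psiFn_of_le (le_of_lt hs)
    have hd : HasDerivAt psiFn 0 t :=
      (hasDerivAt_const t (-(1/2 : ℝ))).congr_of_eventuallyEq he
    have hv : psiDeriv t = 0 := by simp [psiDeriv, le_of_lt h]
    rw [hv]; exact hd
  · subst h
    have hL : HasDerivWithinAt psiFn 0 (Set.Iic (-1 : ℝ)) (-1) := by
      refine ((hasDerivAt_const (-1 : ℝ) (-(1/2 : ℝ))).hasDerivWithinAt).congr ?_ ?_
      · intro s hs; exact psiFn_of_le hs
      · exact psiFn_of_le le_rfl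
    have hR : HasDerivWithinAt psiFn 0 (Set.Icc (-1 : ℝ) 0) (-1) := by
      have hc := (cubic_hasDerivAt (-1)).hasDerivWithinAt (s := Set.Icc (-1 : ℝ) 0)
      have hc' : (3*((-1:ℝ)+1)^2 - 2*((-1:ℝ)+1)^3) = 0 := by norm_num
      rw [hc'] at hc
      refine hc.congr ?_ ?_
      · intro s hs; exact psiFn_of_mid hs.1 hs.2
      · exact psiFn_of_mid le_rfl (by norm_num)
    have hu := hL.union hR
    have hset : Set.Iic (-1 : ℝ) ∪ Set.Icc (-1 : ℝ) 0 = Set.Iic 0 := by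
      ext s
      simp only [Set.mem_union, Set.mem_Iic, Set.mem_Icc]
      constructor
      · rintro (h | h)
        · linarith
        · exact h.2
      · intro h
        rcases le_or_gt s (-1) with h' | h'
        · exact Or.inl h'
        · exact Or.inr ⟨le_of_lt h', h⟩
    rw [hset] at hu
    have hd := hu.hasDerivAt (Iic_mem_nhds (by norm_num))
    have hv : psiDeriv (-1) = 0 := by norm_num [psiDeriv]
    rw [hv]; exact hd
  · rcases lt_trichotomy t 0 with h0 | h0 | h0
    · have he : psiFn =ᶠ[nhds t] (fun s => (s+1)^3 - (1/2)*(s+1)^4 - 1/2) := by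
        filter_upwards [Ioo_mem_nhds h h0] with s hs
        exact psiFn_of_mid (le_of_lt hs.1) (le_of_lt hs.2)
      have hd := (cubic_hasDerivAt t).congr_of_eventuallyEq he
      have hv : psiDeriv t = 3*(t+1)^2 - 2*(t+1)^3 := by
        simp [psiDeriv, not_le.mpr h, le_of_lt h0]
      rw [hv]; exact hd
    · subst h0
      have hL : HasDerivWithinAt psiFn 1 (Set.Icc (-1 : ℝ) 0) 0 := by
        have hc := (cubic_hasDerivAt 0).hasDerivWithinAt (s := Set.Icc (-1 : ℝ) 0)
        have hc' : (3*((0:ℝ)+1)^2 - 2*((0:ℝ)+1)^3) = 1 := by norm_num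
        rw [hc'] at hc
        refine hc.congr ?_ ?_
        · intro s hs; exact psiFn_of_mid hs.1 hs.2
        · exact psiFn_of_mid (by norm_num) le_rfl
      have hR : HasDerivWithinAt psiFn 1 (Set.Ici (0 : ℝ)) 0 := by
        refine ((hasDerivAt_id (0:ℝ)).hasDerivWithinAt).congr ?_ ?_
        · intro s hs; exact psiFn_of_ge hs
        · exact psiFn_of_ge le_rfl
      have hu := hL.union hR
      have hset : Set.Icc (-1 : ℝ) 0 ∪ Set.Ici (0 : ℝ) = Set.Ici (-1 : ℝ) := by
        ext s
        simp only [Set.mem_union, Set.mem_Icc, Set.mem_Ici]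
        constructor
        · rintro (h | h)
          · exact h.1
          · linarith
        · intro h
          rcases le_or_gt s 0 with h' | h'
          · exact Or.inl ⟨h, h'⟩
          · exact Or.inr (le_of_lt h')
      rw [hset] at hu
      have hd := hu.hasDerivAt (Ici_mem_nhds (by norm_num))
      have hv : psiDeriv 0 = 1 := by norm_num [psiDeriv]
      rw [hv]; exact hd
    · have he : psiFn =ᶠ[nhds t] (fun s => s) := by
        filter_upwards [Ioi_mem_nhds h0] with s hs
        exact psiFn_of_ge (le_of_lt hs)
      have hd := (hasDerivAt_id t).congr_of_eventuallyEq he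
      have hv : psiDeriv t = 1 := by
        simp [psiDeriv, not_le.mpr h0, not_le.mpr (by linarith : (-1:ℝ) < t)]
      rw [hv]; exact hd

lemma deriv_psiE (ε t : ℝ) : deriv (psiE ε) t = psiDeriv (ε * t) * ε := by
  have h1 : HasDerivAt (fun s : ℝ => ε * s) ε t := by
    simpa using (hasDerivAt_id t).const_mul ε
  have := (hasDerivAt_psiFn (ε * t)).comp t h1
  exact this.deriv

lemma psiDeriv_nonneg (t : ℝ) : 0 ≤ psiDeriv t := by
  unfold psiDeriv
  split_ifs with h1 h2
  · norm_num
  · nlinarith [sq_nonneg (t+1)]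
  · norm_num

lemma psiDeriv_le_one (t : ℝ) : psiDeriv t ≤ 1 := by
  unfold psiDeriv
  split_ifs with h1 h2
  · norm_num
  · push_neg at h1; nlinarith [sq_nonneg t]
  · norm_num

lemma psiDeriv_key (t : ℝ) : t ≤ psiDeriv t * t := by
  unfold psiDeriv
  split_ifs with h1 h2
  · simpa using h1.trans (by norm_num)
  · push_neg at h1; nlinarith [sq_nonneg t, mul_nonneg (sq_nonneg t) (neg_nonneg.mpr h2)]
  · simp

/-- ε⟨e,x⟩ ≤ Σᵢ ψ_ε′(xᵢ)xᵢ, and consequently, for x with ⟨e,x⟩ ≥ 0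
and u ∈ Δ, Σᵢ ψ_ε′(xᵢ)(xᵢ − ⟨e,x⟩⁺uᵢ) ≥ 0. -/
theorem stmt3 {m : ℕ} (hm : 1 ≤ m) (ε : ℝ) (hε : 0 < ε) :
    (∀ x : Fin m → ℝ, ε * ∑ i, x i ≤ ∑ i, deriv (psiE ε) (x i) * x i) ∧
    (∀ x : Fin m → ℝ, 0 ≤ ∑ i, x i → ∀ u ∈ stdSimplex ℝ (Fin m),
      0 ≤ ∑ i, deriv (psiE ε) (x i) * (x i - max (∑ j, x j) 0 * u i)) := by
  have hpt : ∀ t : ℝ, ε * t ≤ deriv (psiE ε) t * t := by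
    intro t
    rw [deriv_psiE]
    have := psiDeriv_key (ε * t)
    calc ε * t = ε * t := rfl
      _ ≤ psiDeriv (ε*t) * (ε*t) := psiDeriv_key (ε*t)
      _ = psiDeriv (ε*t) * ε * t := by ring
  have hle : ∀ t : ℝ, deriv (psiE ε) t ≤ ε := by
    intro t
    rw [deriv_psiE]
    have := psiDeriv_le_one (ε * t)
    nlinarith
  constructor
  · intro x
    rw [Finset.mul_sum]
    exact Finset.sum_le_sum fun i _ => hpt (x i)
  · intro x hx u hu
    have hc : max (∑ j, x j) 0 = ∑ j, x j := max_eq_left hx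
    have hsum1 : ε * ∑ i, x i ≤ ∑ i, deriv (psiE ε) (x i) * x i := by
      rw [Finset.mul_sum]
      exact Finset.sum_le_sum fun i _ => hpt (x i)
    have hsum2 : ∑ i, deriv (psiE ε) (x i) * (max (∑ j, x j) 0 * u i)
        ≤ ε * ∑ j, x j := by
      calc ∑ i, deriv (psiE ε) (x i) * (max (∑ j, x j) 0 * u i)
          ≤ ∑ i, ε * (max (∑ j, x j) 0 * u i) := by
            refine Finset.sum_le_sum fun i _ => ?_
            have h1 : 0 ≤ max (∑ j, x j) 0 * u i :=
              mul_nonneg (le_max_right _ _) (hu.1 i)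
            exact mul_le_mul_of_nonneg_right (hle (x i)) h1
        _ = ε * (max (∑ j, x j) 0) * ∑ i, u i := by
            rw [Finset.mul_sum]; congr 1; ext i; ring
        _ = ε * ∑ j, x j := by rw [hu.2, hc]; ring
    have : ∑ i, deriv (psiE ε) (x i) * (x i - max (∑ j, x j) 0 * u i)
        = (∑ i, deriv (psiE ε) (x i) * x i)
          - ∑ i, deriv (psiE ε) (x i) * (max (∑ j, x j) 0 * u i) := by
      rw [← Finset.sum_sub_distrib]; congr 1; ext i; ring
    rw [this]
    linarith
end

section
/- With θ ∈ (0,1] and ε > 0, the function V(x) := exp(εθΨ(−x) + Ψ_ε(x)) satisfies the second-order bound Σᵢ λ̃ᵢ ∂²V/∂xᵢ²(x) ≤ ε((3/2)(ε+θ) + εC̄)·V(x) for all x ∈ ℝ^m. -/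
open scoped BigOperators

noncomputable def psiD (t : ℝ) : ℝ :=
  if t ≤ -1 then 0 else if t ≤ 0 then 3*(t+1)^2 - 2*(t+1)^3 else 1

noncomputable def psiDD (t : ℝ) : ℝ :=
  if t ≤ -1 then 0 else if t ≤ 0 then 6*(t+1) - 6*(t+1)^2 else 0

lemma psiFn_left {t : ℝ} (h : t ≤ -1) : psiFn t = -(1/2) := if_pos h
lemma psiFn_mid {t : ℝ} (h1 : -1 ≤ t) (h2 : t ≤ 0) :
    psiFn t = (t+1)^3 - (1/2)*(t+1)^4 - 1/2 := by
  unfold psiFn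
  rcases lt_or_eq_of_le h1 with h | h
  · rw [if_neg (by linarith), if_pos h2]
  · rw [if_pos (by linarith)]; rw [← h]; norm_num
lemma psiFn_right {t : ℝ} (h : 0 ≤ t) : psiFn t = t := by
  unfold psiFn
  rcases lt_or_eq_of_le h with h' | h'
  · rw [if_neg (by linarith), if_neg (by linarith)]
  · rw [if_neg (by linarith), if_pos (by linarith)]; rw [← h']; norm_num

lemma psiD_left {t : ℝ} (h : t ≤ -1) : psiD t = 0 := if_pos h
lemma psiD_mid {t : ℝ} (h1 : -1 ≤ t) (h2 : t ≤ 0) :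
    psiD t = 3*(t+1)^2 - 2*(t+1)^3 := by
  unfold psiD
  rcases lt_or_eq_of_le h1 with h | h
  · rw [if_neg (by linarith), if_pos h2]
  · rw [if_pos (by linarith)]; rw [← h]; norm_num
lemma psiD_right {t : ℝ} (h : 0 ≤ t) : psiD t = 1 := by
  unfold psiD
  rcases lt_or_eq_of_le h with h' | h'
  · rw [if_neg (by linarith), if_neg (by linarith)]
  · rw [if_neg (by linarith), if_pos (by linarith)]; rw [← h']; norm_num

lemma psiDD_left {t : ℝ} (h : t ≤ -1) : psiDD t = 0 := if_pos h
lemma psiDD_mid {t : ℝ} (h1 : -1 ≤ t) (h2 : t ≤ 0) :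
    psiDD t = 6*(t+1) - 6*(t+1)^2 := by
  unfold psiDD
  rcases lt_or_eq_of_le h1 with h | h
  · rw [if_neg (by linarith), if_pos h2]
  · rw [if_pos (by linarith)]; rw [← h]; norm_num
lemma psiDD_right {t : ℝ} (h : 0 ≤ t) : psiDD t = 0 := by
  unfold psiDD
  rcases lt_or_eq_of_le h with h' | h'
  · rw [if_neg (by linarith), if_neg (by linarith)]
  · rw [if_neg (by linarith), if_pos (by linarith)]; rw [← h']; norm_num

lemma glueDeriv {f g F : ℝ → ℝ} {a d : ℝ}
    (hf : HasDerivAt f d a) (hg : HasDerivAt g d a)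
    (hFf : ∀ᶠ t in nhdsWithin a (Set.Iic a), F t = f t)
    (hFg : ∀ᶠ t in nhdsWithin a (Set.Ici a), F t = g t)
    (ha : F a = f a) (ha' : F a = g a) : HasDerivAt F d a := by
  have h1 : HasDerivWithinAt F d (Set.Iic a) a :=
    (hf.hasDerivWithinAt).congr_of_eventuallyEq hFf ha
  have h2 : HasDerivWithinAt F d (Set.Ici a) a :=
    (hg.hasDerivWithinAt).congr_of_eventuallyEq hFg ha'
  have h3 := h1.union h2
  rwa [Set.Iic_union_Ici, hasDerivWithinAt_univ] at h3

lemma poly_hasDeriv (t : ℝ) :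
    HasDerivAt (fun t : ℝ => (t+1)^3 - (1/2)*(t+1)^4 - 1/2)
      (3*(t+1)^2 - 2*(t+1)^3) t := by
  have h1 : HasDerivAt (fun t : ℝ => t + 1) 1 t := (hasDerivAt_id t).add_const 1
  have := ((h1.fun_pow 3).fun_sub ((h1.fun_pow 4).const_mul (1/2:ℝ))).sub_const (1/2:ℝ)
  refine this.congr_deriv ?_
  push_cast
  ring

lemma poly2_hasDeriv (t : ℝ) :
    HasDerivAt (fun t : ℝ => 3*(t+1)^2 - 2*(t+1)^3)
      (6*(t+1) - 6*(t+1)^2) t := by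
  have h1 : HasDerivAt (fun t : ℝ => t + 1) 1 t := (hasDerivAt_id t).add_const 1
  have := ((h1.fun_pow 2).const_mul (3:ℝ)).fun_sub ((h1.fun_pow 3).const_mul (2:ℝ))
  refine this.congr_deriv ?_
  push_cast
  ring

lemma psiFn_hasDeriv (t : ℝ) : HasDerivAt psiFn (psiD t) t := by
  rcases lt_trichotomy t (-1) with h | h | h
  · rw [psiD_left h.le]
    have hev : psiFn =ᶠ[nhds t] fun _ => -(1/2) := by
      filter_upwards [Iio_mem_nhds h] with s hs
      exact psiFn_left hs.le
    exact (hasDerivAt_const t (-(1/2))).congr_of_eventuallyEq hev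
  · subst h
    rw [psiD_left le_rfl]
    have hg : HasDerivAt (fun t : ℝ => (t+1)^3 - (1/2)*(t+1)^4 - 1/2) 0 (-1) := by
      have := poly_hasDeriv (-1); norm_num at this ⊢; exact this
    apply glueDeriv (hasDerivAt_const (-1:ℝ) (-(1/2))) hg
    · filter_upwards [eventually_mem_nhdsWithin] with s hs
      exact psiFn_left hs
    · have h0 : ∀ᶠ s in nhds (-1:ℝ), s < 0 := eventually_lt_nhds (by norm_num)
      filter_upwards [eventually_mem_nhdsWithin, h0.filter_mono nhdsWithin_le_nhds]
        with s hs hs'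
      exact psiFn_mid hs hs'.le
    · exact psiFn_left le_rfl
    · rw [psiFn_left le_rfl]; norm_num
  · rcases lt_trichotomy t 0 with h2 | h2 | h2
    · rw [psiD_mid h.le h2.le]
      have hev : psiFn =ᶠ[nhds t] fun t => (t+1)^3 - (1/2)*(t+1)^4 - 1/2 := by
        filter_upwards [Ioo_mem_nhds h h2] with s hs
        exact psiFn_mid hs.1.le hs.2.le
      exact (poly_hasDeriv t).congr_of_eventuallyEq hev
    · subst h2
      rw [psiD_right le_rfl]
      have hf : HasDerivAt (fun t : ℝ => (t+1)^3 - (1/2)*(t+1)^4 - 1/2) 1 0 := by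
        have := poly_hasDeriv 0; norm_num at this ⊢; exact this
      apply glueDeriv hf (hasDerivAt_id (0:ℝ))
      · have h0 : ∀ᶠ s in nhds (0:ℝ), -1 < s := eventually_gt_nhds (by norm_num)
        filter_upwards [eventually_mem_nhdsWithin, h0.filter_mono nhdsWithin_le_nhds]
          with s hs hs'
        exact psiFn_mid hs'.le hs
      · filter_upwards [eventually_mem_nhdsWithin] with s hs
        exact psiFn_right hs
      · rw [psiFn_right le_rfl]; norm_num
      · exact psiFn_right le_rfl
    · rw [psiD_right h2.le]
      have hev : psiFn =ᶠ[nhds t] fun s => s := by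
        filter_upwards [Ioi_mem_nhds h2] with s hs
        exact psiFn_right hs.le
      exact (hasDerivAt_id t).congr_of_eventuallyEq hev

lemma psiD_hasDeriv (t : ℝ) : HasDerivAt psiD (psiDD t) t := by
  rcases lt_trichotomy t (-1) with h | h | h
  · rw [psiDD_left h.le]
    have hev : psiD =ᶠ[nhds t] fun _ => 0 := by
      filter_upwards [Iio_mem_nhds h] with s hs
      exact psiD_left hs.le
    exact (hasDerivAt_const t 0).congr_of_eventuallyEq hev
  · subst h
    rw [psiDD_left le_rfl]
    have hg : HasDerivAt (fun t : ℝ => 3*(t+1)^2 - 2*(t+1)^3) 0 (-1) := by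
      have := poly2_hasDeriv (-1); norm_num at this ⊢; exact this
    apply glueDeriv (hasDerivAt_const (-1:ℝ) 0) hg
    · filter_upwards [eventually_mem_nhdsWithin] with s hs
      exact psiD_left hs
    · have h0 : ∀ᶠ s in nhds (-1:ℝ), s < 0 := eventually_lt_nhds (by norm_num)
      filter_upwards [eventually_mem_nhdsWithin, h0.filter_mono nhdsWithin_le_nhds]
        with s hs hs'
      exact psiD_mid hs hs'.le
    · exact psiD_left le_rfl
    · rw [psiD_left le_rfl]; norm_num
  · rcases lt_trichotomy t 0 with h2 | h2 | h2
    · rw [psiDD_mid h.le h2.le]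
      have hev : psiD =ᶠ[nhds t] fun t => 3*(t+1)^2 - 2*(t+1)^3 := by
        filter_upwards [Ioo_mem_nhds h h2] with s hs
        exact psiD_mid hs.1.le hs.2.le
      exact (poly2_hasDeriv t).congr_of_eventuallyEq hev
    · subst h2
      rw [psiDD_right le_rfl]
      have hf : HasDerivAt (fun t : ℝ => 3*(t+1)^2 - 2*(t+1)^3) 0 0 := by
        have := poly2_hasDeriv 0; norm_num at this ⊢; exact this
      apply glueDeriv hf (hasDerivAt_const (0:ℝ) 1)
      · have h0 : ∀ᶠ s in nhds (0:ℝ), -1 < s := eventually_gt_nhds (by norm_num)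
        filter_upwards [eventually_mem_nhdsWithin, h0.filter_mono nhdsWithin_le_nhds]
          with s hs hs'
        exact psiD_mid hs'.le hs
      · filter_upwards [eventually_mem_nhdsWithin] with s hs
        exact psiD_right hs
      · rw [psiD_right le_rfl]; norm_num
      · exact psiD_right le_rfl
    · rw [psiDD_right h2.le]
      have hev : psiD =ᶠ[nhds t] fun _ => 1 := by
        filter_upwards [Ioi_mem_nhds h2] with s hs
        exact psiD_right hs.le
      exact (hasDerivAt_const t 1).congr_of_eventuallyEq hev

lemma psiD_nonneg (t : ℝ) : 0 ≤ psiD t := by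
  unfold psiD; split_ifs with h1 h2
  · norm_num
  · push_neg at h1; nlinarith [sq_nonneg (t+1)]
  · norm_num

lemma psiD_le_one (t : ℝ) : psiD t ≤ 1 := by
  unfold psiD; split_ifs with h1 h2
  · norm_num
  · push_neg at h1; nlinarith [sq_nonneg (1-(t+1)), sq_nonneg (t+1), mul_nonneg (sq_nonneg (1-(t+1))) (by linarith : (0:ℝ) ≤ t+1)]
  · norm_num

lemma psiDD_nonneg (t : ℝ) : 0 ≤ psiDD t := by
  unfold psiDD; split_ifs with h1 h2
  · norm_num
  · push_neg at h1; nlinarith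
  · norm_num

lemma psiDD_le (t : ℝ) : psiDD t ≤ 3/2 := by
  unfold psiDD; split_ifs with h1 h2
  · norm_num
  · nlinarith [sq_nonneg (t+1-1/2)]
  · norm_num

noncomputable def gfun (ε θ c t : ℝ) : ℝ := (ε * θ * psiFn (-t) + psiFn (ε * t)) / c
noncomputable def gD1 (ε θ c t : ℝ) : ℝ := (-(ε * θ) * psiD (-t) + ε * psiD (ε * t)) / c
noncomputable def gD2 (ε θ c t : ℝ) : ℝ := (ε * θ * psiDD (-t) + ε ^ 2 * psiDD (ε * t)) / c

lemma gfun_hasDeriv (ε θ c t : ℝ) : HasDerivAt (gfun ε θ c) (gD1 ε θ c t) t := by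
  have h1 : HasDerivAt (fun t : ℝ => psiFn (-t)) (-psiD (-t)) t := by
    have := (psiFn_hasDeriv (-t)).comp t (hasDerivAt_neg t)
    simpa [Function.comp_def, mul_comm] using this
  have h2 : HasDerivAt (fun t : ℝ => psiFn (ε * t)) (ε * psiD (ε * t)) t := by
    have := (psiFn_hasDeriv (ε*t)).comp t ((hasDerivAt_id t).const_mul ε)
    simpa [Function.comp_def, mul_comm] using this
  have h3 := ((h1.const_mul (ε*θ)).add h2).div_const c
  have heq : gD1 ε θ c t = (ε * θ * -psiD (-t) + ε * psiD (ε * t)) / c := by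
    unfold gD1; ring_nf
  rw [heq]
  exact h3

lemma gD1_hasDeriv (ε θ c t : ℝ) : HasDerivAt (gD1 ε θ c) (gD2 ε θ c t) t := by
  have h1 : HasDerivAt (fun t : ℝ => psiD (-t)) (-psiDD (-t)) t := by
    have := (psiD_hasDeriv (-t)).comp t (hasDerivAt_neg t)
    simpa [Function.comp_def, mul_comm] using this
  have h2 : HasDerivAt (fun t : ℝ => psiD (ε * t)) (ε * psiDD (ε * t)) t := by
    have := (psiD_hasDeriv (ε*t)).comp t ((hasDerivAt_id t).const_mul ε)
    simpa [Function.comp_def, mul_comm] using this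
  have h3 := ((h1.const_mul (-(ε*θ))).add (h2.const_mul ε)).div_const c
  have heq : gD2 ε θ c t = (-(ε * θ) * -psiDD (-t) + ε * (ε * psiDD (ε * t))) / c := by
    unfold gD2; ring_nf
  rw [heq]
  exact h3

lemma gD1_sq_le {ε θ c : ℝ} (hε : 0 < ε) (hθ : 0 < θ) (hθ1 : θ ≤ 1) (hc : 0 < c) (t : ℝ) :
    (gD1 ε θ c t)^2 ≤ ε^2 / c^2 := by
  unfold gD1
  rw [div_pow]
  have a1 := psiD_nonneg (-t); have a2 := psiD_le_one (-t)
  have b1 := psiD_nonneg (ε*t); have b2 := psiD_le_one (ε*t)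
  refine (div_le_div_iff_of_pos_right (by positivity : (0:ℝ) < c^2)).mpr ?_
  nlinarith [mul_nonneg (mul_nonneg hε.le hε.le)
      (mul_nonneg (by nlinarith : (0:ℝ) ≤ 1 - (psiD (ε*t) - θ * psiD (-t)))
        (by nlinarith : (0:ℝ) ≤ 1 + (psiD (ε*t) - θ * psiD (-t))))]

lemma gD2_le {ε θ c : ℝ} (hε : 0 < ε) (hθ : 0 < θ) (hc : 0 < c) (t : ℝ) :
    gD2 ε θ c t ≤ (3/2) * (ε*θ + ε^2) / c := by
  unfold gD2
  refine (div_le_div_iff_of_pos_right hc).mpr ?_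
  have u1 := psiDD_nonneg (-t); have u2 := psiDD_le (-t)
  have v1 := psiDD_nonneg (ε*t); have v2 := psiDD_le (ε*t)
  nlinarith [mul_le_mul_of_nonneg_left u2 (mul_nonneg hε.le hθ.le),
    mul_le_mul_of_nonneg_left v2 (sq_nonneg ε)]

noncomputable def Efun {m : ℕ} (μ : Fin m → ℝ) (ε θ : ℝ) (y : Fin m → ℝ) : ℝ :=
  ∑ i, gfun ε θ (μ i) (y i)

noncomputable def Lmap {m : ℕ} (μ : Fin m → ℝ) (ε θ : ℝ) (y : Fin m → ℝ) :
    (Fin m → ℝ) →L[ℝ] ℝ :=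
  ∑ i, gD1 ε θ (μ i) (y i) • ContinuousLinearMap.proj i

lemma Efun_eq {m : ℕ} (μ : Fin m → ℝ) (ε θ : ℝ) (y : Fin m → ℝ) :
    ε * θ * bigPsi μ (-y) + bigPsiE μ ε y = Efun μ ε θ y := by
  unfold bigPsi bigPsiE psiE Efun gfun
  rw [Finset.mul_sum, ← Finset.sum_add_distrib]
  refine Finset.sum_congr rfl fun i _ => ?_
  simp only [Pi.neg_apply]
  ring

lemma Lmap_single {m : ℕ} (μ : Fin m → ℝ) (ε θ : ℝ) (y : Fin m → ℝ) (i : Fin m) :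
    Lmap μ ε θ y (Pi.single i 1) = gD1 ε θ (μ i) (y i) := by
  unfold Lmap
  rw [ContinuousLinearMap.sum_apply, Finset.sum_eq_single i]
  · simp
  · intro j _ hj
    simp [Pi.single_eq_of_ne hj]
  · simp

lemma hasFDeriv_E {m : ℕ} (μ : Fin m → ℝ) (ε θ : ℝ) (y : Fin m → ℝ) :
    HasFDerivAt (Efun μ ε θ) (Lmap μ ε θ y) y := by
  unfold Efun Lmap
  apply HasFDerivAt.fun_sum
  intro i _
  have hproj : HasFDerivAt (fun y : Fin m → ℝ => y i)
      (ContinuousLinearMap.proj i : (Fin m → ℝ) →L[ℝ] ℝ) y :=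
    ContinuousLinearMap.hasFDerivAt (ContinuousLinearMap.proj (R := ℝ) (φ := fun _ : Fin m => ℝ) i)
  exact HasDerivAt.comp_hasFDerivAt y (gfun_hasDeriv ε θ (μ i) (y i)) hproj

lemma hasFDeriv_V {m : ℕ} (μ : Fin m → ℝ) (ε θ : ℝ) (y : Fin m → ℝ) :
    HasFDerivAt (fun w => Real.exp (Efun μ ε θ w))
      (Real.exp (Efun μ ε θ y) • Lmap μ ε θ y) y :=
  (hasFDeriv_E μ ε θ y).exp

lemma fderiv_V_single {m : ℕ} (μ : Fin m → ℝ) (ε θ : ℝ) (y : Fin m → ℝ) (i : Fin m) :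
    fderiv ℝ (fun w => Real.exp (ε * θ * bigPsi μ (-w) + bigPsiE μ ε w)) y (Pi.single i 1)
      = gD1 ε θ (μ i) (y i) * Real.exp (Efun μ ε θ y) := by
  have hfun : (fun w => Real.exp (ε * θ * bigPsi μ (-w) + bigPsiE μ ε w))
      = fun w => Real.exp (Efun μ ε θ w) := funext fun w => by rw [Efun_eq]
  rw [hfun, (hasFDeriv_V μ ε θ y).fderiv, ContinuousLinearMap.smul_apply, Lmap_single,
    smul_eq_mul, mul_comm]

lemma second_fderiv {m : ℕ} (μ : Fin m → ℝ) (ε θ : ℝ) (x : Fin m → ℝ) (i : Fin m) :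
    fderiv ℝ
        (fun y => fderiv ℝ (fun w => Real.exp (ε * θ * bigPsi μ (-w) + bigPsiE μ ε w))
          y (Pi.single i 1)) x (Pi.single i 1)
      = (gD2 ε θ (μ i) (x i) + (gD1 ε θ (μ i) (x i))^2) * Real.exp (Efun μ ε θ x) := by
  have hfun : (fun y => fderiv ℝ
        (fun w => Real.exp (ε * θ * bigPsi μ (-w) + bigPsiE μ ε w)) y (Pi.single i 1))
      = fun y => gD1 ε θ (μ i) (y i) * Real.exp (Efun μ ε θ y) :=
    funext fun y => fderiv_V_single μ ε θ y i
  rw [hfun]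
  have hc : HasFDerivAt (fun y : Fin m → ℝ => gD1 ε θ (μ i) (y i))
      (gD2 ε θ (μ i) (x i) • (ContinuousLinearMap.proj i : (Fin m → ℝ) →L[ℝ] ℝ)) x := by
    have hproj : HasFDerivAt (fun y : Fin m → ℝ => y i)
        (ContinuousLinearMap.proj i : (Fin m → ℝ) →L[ℝ] ℝ) x :=
      ContinuousLinearMap.hasFDerivAt (ContinuousLinearMap.proj (R := ℝ) (φ := fun _ : Fin m => ℝ) i)
    exact HasDerivAt.comp_hasFDerivAt x (gD1_hasDeriv ε θ (μ i) (x i)) hproj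
  have hprod := hc.fun_mul (hasFDeriv_V μ ε θ x)
  rw [hprod.fderiv]
  simp only [ContinuousLinearMap.add_apply, ContinuousLinearMap.smul_apply,
    ContinuousLinearMap.proj_apply, Lmap_single, Pi.single_eq_same, smul_eq_mul]
  ring

/-- the second-order bound
Σᵢ λ̃ᵢ ∂²V/∂xᵢ²(x) ≤ ε((3/2)(ε+θ) + εC̄)·V(x) for V(x) = exp(εθΨ(−x)+Ψ_ε(x)). -/
theorem stmt6 {m : ℕ} (hm : 1 ≤ m) (μ lam : Fin m → ℝ)
    (hμ : ∀ i, 0 < μ i) (hlam : ∀ i, 0 < lam i)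
    (hsum : ∑ i, lam i / μ i = 1)
    (θ ε : ℝ) (hθ : 0 < θ) (hθ1 : θ ≤ 1) (hε : 0 < ε) (x : Fin m → ℝ) :
    ∑ i, lam i *
        fderiv ℝ
          (fun y => fderiv ℝ (fun w => Real.exp (ε * θ * bigPsi μ (-w) + bigPsiE μ ε w))
            y (Pi.single i 1)) x (Pi.single i 1)
      ≤ ε * ((3/2) * (ε + θ) + ε * ∑ i, lam i / (μ i)^2)
          * Real.exp (ε * θ * bigPsi μ (-x) + bigPsiE μ ε x) := by
  have hApos : (0:ℝ) < Real.exp (Efun μ ε θ x) := Real.exp_pos _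
  calc ∑ i, lam i *
        fderiv ℝ
          (fun y => fderiv ℝ (fun w => Real.exp (ε * θ * bigPsi μ (-w) + bigPsiE μ ε w))
            y (Pi.single i 1)) x (Pi.single i 1)
      = ∑ i, lam i * ((gD2 ε θ (μ i) (x i) + (gD1 ε θ (μ i) (x i))^2)
          * Real.exp (Efun μ ε θ x)) := by
        refine Finset.sum_congr rfl fun i _ => ?_
        rw [second_fderiv]
    _ ≤ ∑ i, lam i * (((3/2)*(ε*θ+ε^2)/μ i + ε^2/(μ i)^2) * Real.exp (Efun μ ε θ x)) := by
        refine Finset.sum_le_sum fun i _ => ?_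
        have h1 := gD2_le hε hθ (hμ i) (x i)
        have h2 := gD1_sq_le hε hθ hθ1 (hμ i) (x i)
        have h3 := (hlam i).le
        have h4 := hApos.le
        gcongr
    _ = ∑ i, ((3/2)*(ε*θ+ε^2) * (lam i / μ i) * Real.exp (Efun μ ε θ x)
          + ε^2 * (lam i/(μ i)^2) * Real.exp (Efun μ ε θ x)) :=
        Finset.sum_congr rfl fun i _ => by ring
    _ = (3/2)*(ε*θ+ε^2) * (∑ i, lam i / μ i) * Real.exp (Efun μ ε θ x)
          + ε^2 * (∑ i, lam i/(μ i)^2) * Real.exp (Efun μ ε θ x) := by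
        rw [Finset.sum_add_distrib, ← Finset.sum_mul, ← Finset.sum_mul,
          ← Finset.mul_sum, ← Finset.mul_sum]
    _ = ε * ((3/2) * (ε + θ) + ε * ∑ i, lam i / (μ i)^2)
          * Real.exp (ε * θ * bigPsi μ (-x) + bigPsiE μ ε x) := by
        rw [hsum, Efun_eq μ ε θ x]; ring
end
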